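/- The per-client fairness version reduces to the uniform version: given an instance with m days where each client j has its own fairness requirement k_j ≤ m, construct a new instance with m additional days and two new clients c⁺, c⁻ that conflict with each other on every day of the 2m days; on the first m days neither new client conflicts with any original client; on additional day m+ℓ (for ℓ ∈ {1,…,m}), original client j conflicts with both c⁺ and c⁻ iff ℓ ≤ k_j, and no two original clients conflict. Then the original instance has a solution scheduling each client j on at least k_j days if and only if the new instance has an m-fair solution (every client scheduled on at least m of the 2m days). -/

import Mathlib

open Finset Sum

lemma card_filter_sum_aux {α β : Type*} [Fintype α] [Fintype β] (p : α ⊕ β → Prop)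
    [DecidablePred p] :
    (Finset.univ.filter p).card =
      (Finset.univ.filter (fun a => p (Sum.inl a))).card +
      (Finset.univ.filter (fun b => p (Sum.inr b))).card := by
  rw [← Finset.univ_disjSum_univ, ← Finset.card_disjSum]
  congr 1
  ext x
  cases x <;> simp

lemma card_filter_fin_le_aux (m c : ℕ) :
    (Finset.univ.filter (fun ℓ : Fin m => c ≤ (ℓ : ℕ))).card = m - c := by
  rw [Finset.card_filter]
  rw [Fin.sum_univ_eq_sum_range (fun i => if c ≤ i then 1 else 0)]
  rw [← Finset.card_filter]
  have : (Finset.range m).filter (fun i => c ≤ i) = Finset.Ico c m := by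
    ext x; simp only [Finset.mem_filter, Finset.mem_range, Finset.mem_Ico]; omega
  rw [this, Nat.card_Ico]

theorem per_client_fairness_reduces_to_uniform (n m : ℕ) (k : Fin n → ℕ)
    (hkm : ∀ j, k j ≤ m) (G : Fin m → SimpleGraph (Fin n))
    (H : (Fin m ⊕ Fin m) → SimpleGraph (Fin n ⊕ Bool))
    (hH1 : ∀ i : Fin m, H (Sum.inl i) =
      SimpleGraph.fromRel (fun (a b : Fin n ⊕ Bool) =>
        (∃ a' b', a = Sum.inl a' ∧ b = Sum.inl b' ∧ (G i).Adj a' b') ∨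
        (a = Sum.inr true ∧ b = Sum.inr false)))
    (hH2 : ∀ ℓ : Fin m, H (Sum.inr ℓ) =
      SimpleGraph.fromRel (fun (a b : Fin n ⊕ Bool) =>
        (a = Sum.inr true ∧ b = Sum.inr false) ∨
        (∃ j : Fin n, a = Sum.inl j ∧ (∃ c : Bool, b = Sum.inr c) ∧ (ℓ : ℕ) < k j))) :
    (∃ σ : Fin m → Finset (Fin n),
      (∀ i, ∀ a ∈ σ i, ∀ b ∈ σ i, ¬ (G i).Adj a b) ∧
      (∀ j : Fin n, k j ≤ (Finset.univ.filter (fun i => j ∈ σ i)).card)) ↔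
    (∃ σ' : (Fin m ⊕ Fin m) → Finset (Fin n ⊕ Bool),
      (∀ i, ∀ a ∈ σ' i, ∀ b ∈ σ' i, ¬ (H i).Adj a b) ∧
      (∀ c : Fin n ⊕ Bool,
        m ≤ (Finset.univ.filter (fun i : Fin m ⊕ Fin m => c ∈ σ' i)).card)) := by
  classical
  constructor
  · rintro ⟨σ, hind, hcard⟩
    refine ⟨Sum.elim
      (fun i => (σ i).image Sum.inl ∪ {Sum.inr true})
      (fun ℓ => (Finset.univ.filter (fun j => k j ≤ (ℓ : ℕ))).image Sum.inl ∪ {Sum.inr false}),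
      ?_, ?_⟩
    · intro idx
      cases idx with
      | inl i =>
        intro a ha b hb hadj
        simp only [Sum.elim_inl, Finset.mem_union, Finset.mem_image,
          Finset.mem_singleton] at ha hb
        rw [hH1, SimpleGraph.fromRel_adj] at hadj
        obtain ⟨hne, hr⟩ := hadj
        rcases ha with ⟨x, hx, rfl⟩ | rfl <;> rcases hb with ⟨y, hy, rfl⟩ | rfl
        · rcases hr with (⟨a', b', ha', hb', hadj'⟩ | ⟨h1, _⟩) |
            (⟨a', b', ha', hb', hadj'⟩ | ⟨h1, _⟩)
          · cases ha'; cases hb'; exact hind i x hx y hy hadj'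
          · simp at h1
          · cases ha'; cases hb'; exact hind i y hy x hx hadj'
          · simp at h1
        · rcases hr with (⟨a', b', _, hb', _⟩ | ⟨_, h2⟩) | (⟨a', b', ha', _, _⟩ | ⟨h1, _⟩) <;>
            simp_all
        · rcases hr with (⟨a', b', ha', _, _⟩ | ⟨h1, _⟩) | (⟨a', b', _, hb', _⟩ | ⟨_, h2⟩) <;>
            simp_all
        · exact hne rfl
      | inr ℓ =>
        intro a ha b hb hadj
        simp only [Sum.elim_inr, Finset.mem_union, Finset.mem_image, Finset.mem_filter,
          Finset.mem_univ, true_and, Finset.mem_singleton] at ha hb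
        rw [hH2, SimpleGraph.fromRel_adj] at hadj
        obtain ⟨hne, hr⟩ := hadj
        rcases ha with ⟨x, hx, rfl⟩ | rfl <;> rcases hb with ⟨y, hy, rfl⟩ | rfl
        · rcases hr with (⟨h1, _⟩ | ⟨j, hj, ⟨c, hc⟩, _⟩) | (⟨h1, _⟩ | ⟨j, hj, ⟨c, hc⟩, _⟩) <;>
            simp_all
        · rcases hr with (⟨h1, _⟩ | ⟨j, hj, ⟨c, hc⟩, hlt⟩) | (⟨_, h2⟩ | ⟨j, hj, _, _⟩)
          · simp_all
          · cases hj; exact absurd hlt (by omega)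
          · simp_all
          · simp_all
        · rcases hr with (⟨_, h2⟩ | ⟨j, hj, _, _⟩) | (⟨h1, _⟩ | ⟨j, hj, ⟨c, hc⟩, hlt⟩)
          · simp_all
          · simp_all
          · simp_all
          · cases hj; exact absurd hlt (by omega)
        · exact hne rfl
    · intro c
      rw [card_filter_sum_aux]
      simp only [Sum.elim_inl, Sum.elim_inr, Finset.mem_union, Finset.mem_image,
        Finset.mem_singleton, Finset.mem_filter, Finset.mem_univ, true_and]
      cases c with
      | inl j =>
        simp only [Sum.inl.injEq, exists_eq_right, reduceCtorEq, or_false]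
        rw [card_filter_fin_le_aux]
        have h1 := hcard j
        have h2 := hkm j
        omega
      | inr b =>
        cases b with
        | true =>
          simp only [reduceCtorEq, Sum.inr.injEq, exists_false, false_or, or_false,
            Finset.filter_true, Finset.filter_false, Finset.card_univ, Fintype.card_fin,
            exists_and_right]
          simp
        | false =>
          simp only [reduceCtorEq, Sum.inr.injEq, exists_false, false_or, or_false,
            Finset.filter_true, Finset.filter_false, Finset.card_univ, Fintype.card_fin,
            exists_and_right]
          simp
  · rintro ⟨σ', hind, hcard⟩
    -- every day contains one of the two new clients
    have hday : ∀ i, Sum.inr true ∈ σ' i ∨ Sum.inr false ∈ σ' i := by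
      set S := Finset.univ.filter (fun i => (Sum.inr true : Fin n ⊕ Bool) ∈ σ' i) with hS
      set T := Finset.univ.filter (fun i => (Sum.inr false : Fin n ⊕ Bool) ∈ σ' i) with hT
      have hdisj : Disjoint S T := by
        rw [Finset.disjoint_left]
        intro i hiS hiT
        have hadj : (H i).Adj (Sum.inr true) (Sum.inr false) := by
          cases i with
          | inl i => rw [hH1]; simp [SimpleGraph.fromRel_adj]
          | inr ℓ => rw [hH2]; simp [SimpleGraph.fromRel_adj]
        exact hind i _ (Finset.mem_filter.1 hiS).2 _ (Finset.mem_filter.1 hiT).2 hadj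
      have huniv : S ∪ T = Finset.univ := by
        apply Finset.eq_univ_of_card
        rw [Finset.card_union_of_disjoint hdisj]
        have h1 : m ≤ S.card := hcard (Sum.inr true)
        have h2 : m ≤ T.card := hcard (Sum.inr false)
        have h3 : S.card + T.card ≤ Fintype.card (Fin m ⊕ Fin m) := by
          rw [← Finset.card_union_of_disjoint hdisj, ← Finset.card_univ]
          exact Finset.card_le_card (Finset.subset_univ _)
        simp only [Fintype.card_sum, Fintype.card_fin] at h3 ⊢
        omega
      intro i
      have : i ∈ S ∪ T := huniv ▸ Finset.mem_univ i
      rcases Finset.mem_union.1 this with h | h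
      · exact Or.inl (Finset.mem_filter.1 h).2
      · exact Or.inr (Finset.mem_filter.1 h).2
    refine ⟨fun i => Finset.univ.filter (fun j => Sum.inl j ∈ σ' (Sum.inl i)), ?_, ?_⟩
    · intro i a ha b hb hadj
      have ha' := (Finset.mem_filter.1 ha).2
      have hb' := (Finset.mem_filter.1 hb).2
      refine hind (Sum.inl i) _ ha' _ hb' ?_
      rw [hH1, SimpleGraph.fromRel_adj]
      exact ⟨by simp [hadj.ne], Or.inl (Or.inl ⟨a, b, rfl, rfl, hadj⟩)⟩
    · intro j
      have key : ∀ ℓ : Fin m, Sum.inl j ∈ σ' (Sum.inr ℓ) → k j ≤ (ℓ : ℕ) := by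
        intro ℓ hmem
        by_contra h
        push_neg at h
        rcases hday (Sum.inr ℓ) with ht | hf
        · refine hind (Sum.inr ℓ) _ hmem _ ht ?_
          rw [hH2, SimpleGraph.fromRel_adj]
          exact ⟨by simp, Or.inl (Or.inr ⟨j, rfl, ⟨true, rfl⟩, h⟩)⟩
        · refine hind (Sum.inr ℓ) _ hmem _ hf ?_
          rw [hH2, SimpleGraph.fromRel_adj]
          exact ⟨by simp, Or.inl (Or.inr ⟨j, rfl, ⟨false, rfl⟩, h⟩)⟩
      have htot := hcard (Sum.inl j)
      rw [card_filter_sum_aux] at htot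
      have hBle : (Finset.univ.filter (fun ℓ : Fin m =>
          Sum.inl j ∈ σ' (Sum.inr ℓ))).card ≤ m - k j := by
        rw [← card_filter_fin_le_aux m (k j)]
        apply Finset.card_le_card
        intro ℓ hℓ
        rw [Finset.mem_filter] at hℓ ⊢
        exact ⟨hℓ.1, key ℓ hℓ.2⟩
      have hgoal : (Finset.univ.filter (fun i : Fin m =>
          j ∈ Finset.univ.filter (fun j' => Sum.inl j' ∈ σ' (Sum.inl i)))) =
          Finset.univ.filter (fun i : Fin m => Sum.inl j ∈ σ' (Sum.inl i)) := by
        apply Finset.filter_congr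
        intro i _
        simp
      rw [hgoal]
      have h2 := hkm j
      omega
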